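/- arXiv:math/0604210 — 3 statements merged into one kernel-verified Lean document; each statement's English description precedes it below -/
import Mathlib

section
/- (Myhill property) Let c be a positive integer, 1 ≤ d ≤ c, and let A ⊆ ZMod c be a maximally even set of cardinality d. List the elements of A as a_0, a_1, …, a_{d-1} in increasing order of their canonical representatives in {0, …, c-1}, and define the d cyclic gaps g_i = a_{(i+1) mod d} - a_i ∈ ZMod c for i = 0, …, d-1. Then the set {g_0, …, g_{d-1}} has at most two elements, and it has exactly one element if and only if d divides c. -/
/-- The discrete Fourier transform of a finite subset `A` of `ZMod c`:
`F_A(t) = ∑_{k ∈ A} exp(-2πi·(k.val)·(t.val)/c)`. -/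
noncomputable def fourierTransform (c : ℕ) (A : Finset (ZMod c)) (t : ZMod c) : ℂ :=
  ∑ k ∈ A, Complex.exp (-2 * Real.pi * Complex.I * ((k.val : ℂ) * (t.val : ℂ)) / c)

/-- `A ⊆ ZMod c` is maximally even of cardinality `d` if `A` has cardinality `d` and
`|F_A(d)| ≥ |F_B(d)|` for every subset `B` of cardinality `d`. -/
def MaximallyEven (c d : ℕ) (A : Finset (ZMod c)) : Prop :=
  A.card = d ∧ ∀ B : Finset (ZMod c), B.card = d →
    ‖fourierTransform c B (d : ZMod c)‖ ≤
      ‖fourierTransform c A (d : ZMod c)‖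


open Complex Finset

noncomputable def Efun (N : ℕ) (v : ℕ) : ℂ :=
  Complex.exp (-2 * Real.pi * Complex.I * v / N)

lemma Efun_mod (N : ℕ) (hN : N ≠ 0) (v : ℕ) : Efun N v = Efun N (v % N) := by
  unfold Efun
  have hNr : (N : ℂ) ≠ 0 := Nat.cast_ne_zero.mpr hN
  conv_lhs => rw [show v = N * (v / N) + v % N from (Nat.div_add_mod v N).symm]
  generalize v % N = r
  generalize v / N = q
  rw [show (-2 * Real.pi * Complex.I * ((N * q + r : ℕ) : ℂ) / N)
      = -2 * Real.pi * Complex.I * (r : ℂ) / N + (-(q : ℤ)) * (2 * Real.pi * Complex.I) by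
    push_cast
    field_simp
    ring]
  have h1 := Complex.exp_int_mul_two_pi_mul_I (-(q:ℤ))
  push_cast at h1
  rw [Complex.exp_add]
  push_cast
  rw [h1, mul_one]

lemma Efun_congr (N : ℕ) (hN : N ≠ 0) (v w : ℕ) (h : v % N = w % N) :
    Efun N v = Efun N w := by
  rw [Efun_mod N hN v, Efun_mod N hN w, h]

lemma Efun_inj (N : ℕ) (hN : N ≠ 0) (v w : ℕ) (hv : v < N) (hw : w < N)
    (h : Efun N v = Efun N w) : v = w := by
  unfold Efun at h
  rw [Complex.exp_eq_exp_iff_exists_int] at h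
  obtain ⟨m, hm⟩ := h
  have hNr : (N : ℂ) ≠ 0 := Nat.cast_ne_zero.mpr hN
  have hpi : (Real.pi : ℂ) ≠ 0 := by exact_mod_cast Real.pi_ne_zero
  field_simp at hm
  have hne : ((-2 : ℂ) * Real.pi * Complex.I * N) ≠ 0 := by
    simp [hpi, Complex.I_ne_zero, hNr]
  have h3 : ((-2 : ℂ) * Real.pi * Complex.I * N) * (v : ℂ)
      = ((-2 : ℂ) * Real.pi * Complex.I * N) * ((w : ℂ) - m * N) := by
    linear_combination (2 * (Real.pi:ℂ) * Complex.I * N) * hm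
  have h4 : (v : ℂ) = (w : ℂ) - m * N := mul_left_cancel₀ hne h3
  have h5 : (v : ℝ) = (w : ℝ) - m * N := by
    have := congrArg Complex.re h4
    push_cast at this ⊢
    simpa using this
  have hm0 : m = 0 := by
    by_contra hm0
    have h1 : (1:ℝ) ≤ |(m:ℝ)| := by
      have : (1:ℤ) ≤ |m| := Int.one_le_abs (by omega)
      calc (1:ℝ) ≤ ((|m| : ℤ) : ℝ) := by exact_mod_cast this
        _ = |(m:ℝ)| := by push_cast; rfl
    have hNpos : (0:ℝ) < N := by
      have := Nat.pos_of_ne_zero hN; exact_mod_cast this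
    have h2 : (N:ℝ) ≤ |(m:ℝ) * N| := by
      rw [abs_mul, abs_of_pos hNpos]
      nlinarith
    have h6 : |(m:ℝ) * N| = |(w:ℝ) - v| := by
      rw [show (w:ℝ) - v = m * N by linarith]
    have h7 : |(w:ℝ) - v| < N := by
      rw [abs_sub_lt_iff]
      constructor <;> nlinarith [show (w:ℝ) < N from by exact_mod_cast hw,
        show (v:ℝ) < N from by exact_mod_cast hv,
        show (0:ℝ) ≤ w from Nat.cast_nonneg w, show (0:ℝ) ≤ v from Nat.cast_nonneg v]
    linarith
  rw [hm0] at h5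
  norm_num at h5
  exact_mod_cast h5

open Finset

lemma zmod_cast_self {c : ℕ} [NeZero c] (k : ZMod c) : ((k.val : ℕ) : ZMod c) = k :=
  ZMod.natCast_rightInverse k

lemma cast_fiber_card (N g : ℕ) [NeZero (N * g)] (hN : 0 < N) (hg : 0 < g) (j : ZMod N) :
    (Finset.univ.filter fun k : ZMod (N * g) => ((k.val : ℕ) : ZMod N) = j).card = g := by
  letI : NeZero N := ⟨hN.ne'⟩
  have key : (Finset.univ.filter fun k : ZMod (N * g) => ((k.val : ℕ) : ZMod N) = j).card
      = (Finset.range g).card := by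
    apply Finset.card_bij' (i := fun k _ => k.val / N)
      (j := fun i _ => ((j.val + N * i : ℕ) : ZMod (N * g)))
    · intro k hk
      simp only [Finset.mem_filter, Finset.mem_univ, true_and] at hk
      simp only [Finset.mem_range]
      have : k.val < N * g := k.val_lt
      exact Nat.div_lt_of_lt_mul (by omega)
    · intro i hi
      simp only [Finset.mem_range] at hi
      simp only [Finset.mem_filter, Finset.mem_univ, true_and]
      have hlt : j.val + N * i < N * g := by
        have : j.val < N := j.val_lt
        calc j.val + N * i < N + N * i := by omega
          _ = N * (i + 1) := by ring
          _ ≤ N * g := Nat.mul_le_mul_left N (by omega)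
      rw [ZMod.val_cast_of_lt hlt]
      push_cast
      simp [zmod_cast_self]
    · intro k hk
      simp only [Finset.mem_filter, Finset.mem_univ, true_and] at hk
      have hmod : k.val % N = j.val := by
        have : ((k.val : ℕ) : ZMod N).val = j.val := by rw [hk]
        rwa [ZMod.val_natCast] at this
      have : j.val + N * (k.val / N) = k.val := by
        rw [← hmod, Nat.mod_add_div]
      rw [this, zmod_cast_self]
    · intro i hi
      simp only [Finset.mem_range] at hi
      have hlt : j.val + N * i < N * g := by
        have : j.val < N := j.val_lt
        calc j.val + N * i < N + N * i := by omega
          _ = N * (i + 1) := by ring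
          _ ≤ N * g := Nat.mul_le_mul_left N (by omega)
      rw [ZMod.val_cast_of_lt hlt]
      have : j.val < N := j.val_lt
      rw [Nat.add_mul_div_left _ _ hN, Nat.div_eq_of_lt this, zero_add]

  simpa using key

open Finset Real

noncomputable def Dfun (N : ℕ) (s : ℝ) (j : ZMod N) : ℝ :=
  min (Int.fract (((j.val : ℝ) - s) / N)) (1 - Int.fract (((j.val : ℝ) - s) / N))

lemma Dfun_mem (N : ℕ) (s : ℝ) (j : ZMod N) : Dfun N s j ∈ Set.Icc (0:ℝ) (1/2) := by
  unfold Dfun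
  have h0 := Int.fract_nonneg (((j.val : ℝ) - s) / N)
  have h1 := Int.fract_lt_one (((j.val : ℝ) - s) / N)
  constructor
  · simp only [le_min_iff]
    constructor <;> linarith
  · rcases le_total (Int.fract (((j.val : ℝ) - s) / N)) (1/2) with h|h
    · exact le_trans (min_le_left _ _) h
    · exact le_trans (min_le_right _ _) (by linarith)

lemma cos_eq_cos_Dfun (N : ℕ) (s : ℝ) (j : ZMod N) :
    Real.cos (2 * π * (((j.val : ℝ) - s) / N)) = Real.cos (2 * π * Dfun N s j) := by
  set x := (((j.val : ℝ) - s) / N) with hx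
  have h1 : Real.cos (2 * π * x) = Real.cos (2 * π * Int.fract x) := by
    conv_lhs => rw [show x = Int.fract x + ⌊x⌋ from by rw [Int.fract]; ring]
    rw [show 2 * π * (Int.fract x + ⌊x⌋) = 2 * π * Int.fract x + ⌊x⌋ * (2 * π) from by ring]
    exact Real.cos_add_int_mul_two_pi _ _
  rw [h1]
  unfold Dfun
  rw [← hx]
  rcases le_total (Int.fract x) (1 - Int.fract x) with h|h
  · rw [min_eq_left h]
  · rw [min_eq_right h]
    rw [show 2 * π * (1 - Int.fract x) = 2 * π - 2 * π * Int.fract x from by ring]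
    rw [Real.cos_two_pi_sub]

lemma cos_two_pi_lt_iff (a b : ℝ) (ha : a ∈ Set.Icc (0:ℝ) (1/2)) (hb : b ∈ Set.Icc (0:ℝ) (1/2)) :
    Real.cos (2 * π * a) < Real.cos (2 * π * b) ↔ b < a := by
  have hpi := Real.pi_pos
  have hma : 2 * π * a ∈ Set.Icc 0 π := ⟨by nlinarith [ha.1], by nlinarith [ha.2]⟩
  have hmb : 2 * π * b ∈ Set.Icc 0 π := ⟨by nlinarith [hb.1], by nlinarith [hb.2]⟩
  constructor
  · intro h
    by_contra hab
    push_neg at hab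
    rcases eq_or_lt_of_le hab with h'|h'
    · rw [h'] at h; exact lt_irrefl _ h
    · have := Real.strictAntiOn_cos hma hmb (by nlinarith)
      linarith
  · intro h
    exact Real.strictAntiOn_cos hmb hma (by nlinarith)

lemma cos_two_pi_inj (a b : ℝ) (ha : a ∈ Set.Icc (0:ℝ) (1/2)) (hb : b ∈ Set.Icc (0:ℝ) (1/2))
    (h : Real.cos (2 * π * a) = Real.cos (2 * π * b)) : a = b := by
  by_contra hne
  rcases lt_or_gt_of_ne hne with h'|h'
  · have := (cos_two_pi_lt_iff b a hb ha).2 h'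
    rw [h] at this; exact lt_irrefl _ this
  · have := (cos_two_pi_lt_iff a b ha hb).2 h'
    rw [h] at this; exact lt_irrefl _ this

lemma arc_of_min (N : ℕ) [NeZero N] (n : ℕ) (hn1 : 1 ≤ n) (hnN : n < N) (s : ℝ)
    (F : Finset (ZMod N)) (hcard : F.card = n)
    (hF : ∀ j ∈ F, ∀ j' ∉ F, Dfun N s j < Dfun N s j') :
    ∃ w : ZMod N, ∀ j, j ∈ F ↔ (j - w).val < n := by
  have hNpos : 0 < N := Nat.pos_of_ne_zero (NeZero.ne N)
  have hNr : (0:ℝ) < N := by exact_mod_cast hNpos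
  have hFne : F.Nonempty := Finset.card_pos.mp (by omega)
  obtain ⟨jm, hjmF, hjm⟩ := Finset.exists_max_image F (Dfun N s) hFne
  set lam := Dfun N s jm with hlam
  have hlam0 : 0 ≤ lam := (Dfun_mem N s jm).1
  have hlamhalf : lam ≤ 1/2 := (Dfun_mem N s jm).2
  have hFiff : ∀ j, j ∈ F ↔ Dfun N s j ≤ lam := by
    intro j
    constructor
    · exact fun hj => hjm j hj
    · intro hD
      by_contra hj
      have := hF jm hjmF j hj
      linarith
  -- bridge
  have bridge : ∀ j : ZMod N, Dfun N s j ≤ lam ↔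
      ∃ z : ℤ, ((z : ℤ) : ZMod N) = j ∧ |(z:ℝ) - s| ≤ lam * N := by
    intro j
    set x := (((j.val : ℝ) - s) / N) with hx
    constructor
    · intro hD
      unfold Dfun at hD
      rw [← hx] at hD
      rcases min_le_iff.mp hD with h|h
      · refine ⟨(j.val : ℤ) - N * ⌊x⌋, ?_, ?_⟩
        · push_cast
          simp [ZMod.natCast_self, zmod_cast_self]
        · have : ((j.val:ℤ) - N * ⌊x⌋ : ℝ) - s = N * Int.fract x := by
            push_cast
            rw [Int.fract]
            field_simp [hx]
            have hNx : (N:ℝ) * x = j.val - s := by rw [hx]; field_simp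
            linarith
          rw [show (((j.val : ℤ) - N * ⌊x⌋ : ℤ):ℝ) = ((j.val:ℤ) - N * ⌊x⌋ : ℝ) from by push_cast; ring, this]
          rw [_root_.abs_of_nonneg (mul_nonneg (le_of_lt hNr) (Int.fract_nonneg x))]
          calc (N:ℝ) * Int.fract x = Int.fract x * N := by ring
            _ ≤ lam * N := by
              apply mul_le_mul_of_nonneg_right h (le_of_lt hNr)
      · refine ⟨(j.val : ℤ) - N * (⌊x⌋ + 1), ?_, ?_⟩
        · push_cast
          simp [ZMod.natCast_self, zmod_cast_self]
        · have heq : (((j.val:ℤ) - N * (⌊x⌋ + 1) : ℤ) : ℝ) - s = N * (Int.fract x - 1) := by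
            push_cast
            rw [Int.fract]
            field_simp [hx]
            have hNx : (N:ℝ) * x = j.val - s := by rw [hx]; field_simp
            linarith
          rw [heq]
          have hf1 := Int.fract_lt_one x
          rw [abs_of_nonpos (by nlinarith)]
          calc -((N:ℝ) * (Int.fract x - 1)) = (1 - Int.fract x) * N := by ring
            _ ≤ lam * N := mul_le_mul_of_nonneg_right h (le_of_lt hNr)
    · rintro ⟨z, hz, hzs⟩
      have hmodz : ∃ t : ℤ, (j.val : ℤ) - z = N * t := by
        have : (((j.val : ℤ) - z : ℤ) : ZMod N) = 0 := by
          push_cast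
          rw [hz, zmod_cast_self]
          ring
        obtain ⟨t, ht⟩ := (ZMod.intCast_zmod_eq_zero_iff_dvd _ _).mp this
        exact ⟨t, ht⟩
      obtain ⟨t, ht⟩ := hmodz
      set y := ((z:ℝ) - s) / N with hy
      have hxy : x = y + t := by
        rw [hx, hy]
        have : ((j.val:ℝ)) = z + N * t := by
          have := congrArg (fun u : ℤ => (u:ℝ)) ht
          push_cast at this
          linarith
        rw [this]
        field_simp
        ring
      have hfract : Int.fract x = Int.fract y := by rw [hxy, Int.fract_add_intCast]
      have hyabs : |y| ≤ lam := by
        rw [hy, abs_div, abs_of_pos hNr]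
        rw [div_le_iff₀ hNr]
        exact hzs
      unfold Dfun
      rw [← hx, hfract]
      rcases le_or_gt 0 y with h0|h0
      · have : Int.fract y = y := Int.fract_eq_self.mpr ⟨h0, by
          have := abs_le.mp hyabs
          linarith⟩
        rw [this]
        refine le_trans (min_le_left _ _) ?_
        have := abs_le.mp hyabs
        linarith
      · have hy1 : Int.fract y = Int.fract (y + 1) := by
          conv_lhs => rw [show y = (y + 1) + ((-1 : ℤ) : ℝ) from by push_cast; ring]
          rw [Int.fract_add_intCast]
        have hy2 : Int.fract (y + 1) = y + 1 := by
          refine Int.fract_eq_self.mpr ⟨?_, ?_⟩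
          · have := abs_le.mp hyabs
            linarith
          · linarith
        rw [hy1, hy2]
        refine le_trans (min_le_right _ _) ?_
        have := abs_le.mp hyabs
        linarith
  -- interval endpoints
  set a0 : ℤ := ⌈s - lam * N⌉ with ha0
  set b0 : ℤ := ⌊s + lam * N⌋ with hb0
  have habs_iff : ∀ z : ℤ, |(z:ℝ) - s| ≤ lam * N ↔ (a0 ≤ z ∧ z ≤ b0) := by
    intro z
    rw [abs_le]
    constructor
    · rintro ⟨h1, h2⟩
      exact ⟨Int.ceil_le.mpr (by linarith), Int.le_floor.mpr (by linarith)⟩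
    · rintro ⟨h1, h2⟩
      have := Int.ceil_le.mp h1
      have := Int.le_floor.mp h2
      constructor <;> linarith
  have hmemF : ∀ j : ZMod N, j ∈ F ↔ ∃ z : ℤ, ((z:ℤ) : ZMod N) = j ∧ a0 ≤ z ∧ z ≤ b0 := by
    intro j
    rw [hFiff, bridge]
    constructor
    · rintro ⟨z, hz, h⟩; exact ⟨z, hz, (habs_iff z).mp h⟩
    · rintro ⟨z, hz, h⟩; exact ⟨z, hz, (habs_iff z).mpr h⟩
  have hab : a0 ≤ b0 := by
    obtain ⟨z, _, hz1, hz2⟩ := (hmemF jm).mp hjmF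
    omega
  set K : ℕ := (b0 - a0).toNat with hK
  have hKba : (K : ℤ) = b0 - a0 := Int.toNat_of_nonneg (by omega)
  -- K < N
  have hKN : K < N := by
    by_contra hKge
    push_neg at hKge
    have hall : ∀ j : ZMod N, j ∈ F := by
      intro j
      rw [hmemF]
      refine ⟨a0 + (j - (a0 : ZMod N)).val, ?_, by omega, ?_⟩
      · push_cast
        rw [zmod_cast_self]
        ring
      · have : (j - (a0 : ZMod N)).val < N := ZMod.val_lt _
        omega
    have : F = Finset.univ := Finset.eq_univ_of_forall hall
    rw [this, Finset.card_univ, ZMod.card] at hcard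
    omega
  have hmemF' : ∀ j : ZMod N, j ∈ F ↔ (j - (a0 : ZMod N)).val ≤ K := by
    intro j
    rw [hmemF]
    constructor
    · rintro ⟨z, hz, h1, h2⟩
      obtain ⟨i, hi⟩ : ∃ i : ℕ, z = a0 + (i : ℤ) := ⟨(z - a0).toNat, by omega⟩
      have hvi : i ≤ K := by omega
      have : j - (a0 : ZMod N) = ((i : ℕ) : ZMod N) := by
        rw [← hz, hi]
        push_cast
        ring
      rw [this, ZMod.val_natCast, Nat.mod_eq_of_lt (by omega)]
      exact hvi
    · intro h
      refine ⟨a0 + (j - (a0 : ZMod N)).val, ?_, by omega, by omega⟩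
      push_cast
      rw [zmod_cast_self]
      ring
  -- card F = K + 1
  have hcardK : F.card = K + 1 := by
    have : F.card = (Finset.range (K+1)).card := by
      apply Finset.card_bij' (i := fun j _ => (j - (a0 : ZMod N)).val)
        (j := fun i _ => (a0 : ZMod N) + (i : ℕ))
      · intro j hj
        rw [hmemF'] at hj
        simp only [Finset.mem_range]
        omega
      · intro i hi
        simp only [Finset.mem_range] at hi
        rw [hmemF']
        rw [show (a0:ZMod N) + (i:ℕ) - (a0:ZMod N) = ((i:ℕ) : ZMod N) from by ring]
        rw [ZMod.val_natCast, Nat.mod_eq_of_lt (by omega)]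
        omega
      · intro j hj
        rw [zmod_cast_self]
        ring
      · intro i hi
        simp only [Finset.mem_range] at hi
        rw [show (a0:ZMod N) + (i:ℕ) - (a0:ZMod N) = ((i:ℕ) : ZMod N) from by ring]
        rw [ZMod.val_natCast, Nat.mod_eq_of_lt (by omega)]
    rw [this, Finset.card_range]
  refine ⟨(a0 : ZMod N), fun j => ?_⟩
  rw [hmemF' j]
  omega

open Finset Real Complex

theorem arc_structure (c N g n : ℕ) [NeZero c] (hc : c = N * g) (hg : 0 < g)
    (hn1 : 1 ≤ n) (hnN : n < N) (hco : n.Coprime N)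
    (A : Finset (ZMod c)) (hA : MaximallyEven c (n * g) A) :
    ∃ w : ZMod N, ∀ k : ZMod c,
      k ∈ A ↔ ((((n * k.val : ℕ) : ZMod N)) - w).val < n := by
  subst hc
  have hN : 0 < N := by omega
  haveI : NeZero N := ⟨hN.ne'⟩
  have hNne : N ≠ 0 := hN.ne'
  have hdc : n * g < N * g := (Nat.mul_lt_mul_right hg).mpr hnN
  have hcne : (N * g : ℕ) ≠ 0 := NeZero.ne _
  set ψ : ZMod (N * g) → ZMod N := fun k => ((n * k.val : ℕ) : ZMod N) with hψdef
  -- fiber cardinality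
  have hfiber : ∀ j : ZMod N, (Finset.univ.filter fun k => ψ k = j).card = g := by
    intro j
    set u : (ZMod N)ˣ := ZMod.unitOfCoprime n hco with hu
    have huc : (u : ZMod N) = (n : ZMod N) := ZMod.coe_unitOfCoprime n hco
    have hψ : ∀ k : ZMod (N * g), (ψ k = j ↔ ((k.val : ℕ) : ZMod N) = (↑u⁻¹ : ZMod N) * j) := by
      intro k
      have hψk : ψ k = (u : ZMod N) * ((k.val : ℕ) : ZMod N) := by
        rw [hψdef, huc]
        push_cast
        ring
      rw [hψk]
      constructor
      · intro h
        rw [← h, ← mul_assoc, Units.inv_mul, one_mul]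
      · intro h
        rw [h, ← mul_assoc, Units.mul_inv, one_mul]
    have : (Finset.univ.filter fun k => ψ k = j)
        = (Finset.univ.filter fun k : ZMod (N * g) => ((k.val : ℕ) : ZMod N) = (↑u⁻¹ : ZMod N) * j) := by
      apply Finset.filter_congr
      intro k _
      exact hψ k
    rw [this]
    exact cast_fiber_card N g hN hg _
  -- counts
  set cnt : Finset (ZMod (N * g)) → ZMod N → ℕ := fun B j => (B.filter fun k => ψ k = j).card with hcnt
  have hcnt_le : ∀ B j, cnt B j ≤ g := by
    intro B j
    rw [← hfiber j]
    exact Finset.card_le_card (Finset.filter_subset_filter _ (Finset.subset_univ B))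
  have hcnt_sum : ∀ B : Finset (ZMod (N * g)), ∑ j : ZMod N, cnt B j = B.card :=
    fun B => (Finset.card_eq_sum_card_fiberwise (fun x _ => Finset.mem_univ (ψ x))).symm
  -- Fourier rewrite
  have hT : ∀ B : Finset (ZMod (N * g)),
      fourierTransform (N * g) B ((n * g : ℕ) : ZMod (N * g)) = ∑ k ∈ B, Efun N ((ψ k).val) := by
    intro B
    unfold fourierTransform
    apply Finset.sum_congr rfl
    intro k _
    have hval : (((n * g : ℕ) : ZMod (N * g)).val : ℂ) = ((n * g : ℕ) : ℂ) := by
      rw [ZMod.val_cast_of_lt hdc]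
    rw [hval]
    have h1 : (-2 * (π : ℂ) * Complex.I * ((k.val : ℂ) * ((n * g : ℕ) : ℂ)) / ((N * g : ℕ) : ℂ))
        = -2 * (π : ℂ) * Complex.I * ((n * k.val : ℕ) : ℂ) / (N : ℂ) := by
      have hNc : (N : ℂ) ≠ 0 := Nat.cast_ne_zero.mpr hNne
      have hgc : (g : ℂ) ≠ 0 := Nat.cast_ne_zero.mpr hg.ne'
      push_cast
      field_simp
    rw [h1]
    have h2 : Complex.exp (-2 * (π : ℂ) * Complex.I * ((n * k.val : ℕ) : ℂ) / (N : ℂ))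
        = Efun N (n * k.val) := rfl
    rw [h2, Efun_mod N hNne (n * k.val)]
    congr 1
    exact (ZMod.val_natCast _ _).symm
  -- regroup
  have hTsum : ∀ B : Finset (ZMod (N * g)),
      (∑ k ∈ B, Efun N ((ψ k).val)) = ∑ j : ZMod N, (cnt B j : ℂ) * Efun N j.val := by
    intro B
    rw [← Finset.sum_fiberwise_of_maps_to (fun k _ => Finset.mem_univ (ψ k))
      (fun k => Efun N ((ψ k).val))]
    apply Finset.sum_congr rfl
    intro j _
    have : ∀ k ∈ B.filter (fun k => ψ k = j), Efun N ((ψ k).val) = Efun N j.val := by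
      intro k hk
      rw [(Finset.mem_filter.mp hk).2]
    rw [Finset.sum_congr rfl this, Finset.sum_const, nsmul_eq_mul]
  -- the maximizer and direction
  set S : ℂ := fourierTransform (N * g) A ((n * g : ℕ) : ZMod (N * g)) with hSdef
  set α : ℝ := Complex.arg S with hα
  set u : ℂ := Complex.exp (((-α : ℝ) : ℂ) * Complex.I) with hudef
  have huabs : ‖u‖ = 1 := Complex.norm_exp_ofReal_mul_I _
  have huS : u * S = (‖S‖ : ℂ) := by
    conv_lhs => rw [← Complex.norm_mul_exp_arg_mul_I S]
    rw [hudef, ← hα]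
    rw [show u * ((‖S‖ : ℂ) * Complex.exp ((α : ℂ) * Complex.I))
        = (‖S‖ : ℂ) * (Complex.exp (((-α : ℝ) : ℂ) * Complex.I) * Complex.exp ((α : ℂ) * Complex.I)) from by rw [hudef]; ring]
    rw [← Complex.exp_add]
    norm_num
  have hupos : u ≠ 0 := Complex.exp_ne_zero _
  set s : ℝ := -α * N / (2 * π) with hsdef
  have hpi : (0:ℝ) < π := Real.pi_pos
  have hNr : (0:ℝ) < N := by exact_mod_cast hN
  have hUE : ∀ v : ℕ, u * Efun N v
      = Complex.exp (((-(2 * π * (((v : ℝ) - s) / N)) : ℝ) : ℂ) * Complex.I) := by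
    intro v
    have hEv : Efun N v = Complex.exp (((-(2 * π * v / N) : ℝ) : ℂ) * Complex.I) := by
      unfold Efun
      congr 1
      push_cast
      field_simp
    rw [hEv, hudef, ← Complex.exp_add]
    congr 1
    rw [show ((-α : ℝ) : ℂ) * Complex.I + ((-(2 * π * v / N) : ℝ) : ℂ) * Complex.I
        = (((-α + -(2 * π * v / N)) : ℝ) : ℂ) * Complex.I from by push_cast; ring]
    congr 2
    rw [hsdef]
    field_simp
    ring
  set ρ : ZMod N → ℝ := fun j => Real.cos (2 * π * (((j.val : ℝ) - s) / N)) with hρdef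
  set σ : ZMod N → ℝ := fun j => Real.sin (2 * π * (((j.val : ℝ) - s) / N)) with hσdef
  have hρ : ∀ j : ZMod N, (u * Efun N j.val).re = ρ j := by
    intro j
    rw [hUE j.val, Complex.exp_ofReal_mul_I_re, hρdef]
    simp [Real.cos_neg]
  have hσ : ∀ j : ZMod N, (u * Efun N j.val).im = -σ j := by
    intro j
    rw [hUE j.val, Complex.exp_ofReal_mul_I_im, hσdef]
    simp [Real.sin_neg]
  have hρD : ∀ j, ρ j = Real.cos (2 * π * Dfun N s j) := fun j => cos_eq_cos_Dfun N s j
  have hSsum : S = ∑ k ∈ A, Efun N ((ψ k).val) := hT A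
  have hReA : (u * S).re = ‖S‖ := by rw [huS]; simp
  have hImA : (u * S).im = 0 := by rw [huS]; simp
  -- swap lemma
  have SW : ∀ x ∈ A, ∀ y ∉ A,
      ρ (ψ y) ≤ ρ (ψ x) ∧ (ρ (ψ y) = ρ (ψ x) → ψ x = ψ y) := by
    intro x hx y hy
    set B : Finset (ZMod (N * g)) := insert y (A.erase x) with hBdef
    have hyB : y ∉ A.erase x := fun h => hy (Finset.mem_of_mem_erase h)
    have hd1 : 1 ≤ n * g := Nat.mul_le_mul hn1 hg
    have hBcard : B.card = n * g := by
      rw [hBdef, Finset.card_insert_of_notMem hyB, Finset.card_erase_of_mem hx, hA.1]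
      omega
    set TB : ℂ := ∑ k ∈ B, Efun N ((ψ k).val) with hTBdef
    have hTB : TB = S - Efun N ((ψ x).val) + Efun N ((ψ y).val) := by
      rw [hTBdef, hBdef, Finset.sum_insert hyB, Finset.sum_erase_eq_sub hx, ← hSsum]
      ring
    have habsB : ‖TB‖ ≤ ‖S‖ := by
      rw [hTBdef, ← hT B]
      exact hA.2 B hBcard
    have hreB : (u * TB).re = ‖S‖ - ρ (ψ x) + ρ (ψ y) := by
      rw [hTB, show u * (S - Efun N ((ψ x).val) + Efun N ((ψ y).val))
          = u * S - u * Efun N ((ψ x).val) + u * Efun N ((ψ y).val) from by ring]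
      rw [Complex.add_re, Complex.sub_re, hρ, hρ, hReA]
    have hleB : (u * TB).re ≤ ‖TB‖ := by
      calc (u * TB).re ≤ ‖u * TB‖ := Complex.re_le_norm _
        _ = ‖TB‖ := by rw [norm_mul, huabs, one_mul]
    have hineq : ρ (ψ y) ≤ ρ (ψ x) := by
      have := le_trans hleB habsB
      rw [hreB] at this
      linarith
    refine ⟨hineq, fun heq => ?_⟩
    have hre_eq : (u * TB).re = ‖S‖ := by rw [hreB, heq]; ring
    have habs_eq : ‖TB‖ = (u * TB).re := by
      have h1 : ‖S‖ ≤ ‖TB‖ := by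
        rw [← hre_eq]; exact hleB
      have h2 := habsB
      rw [hre_eq]
      linarith
    have hmulabs : ‖u * TB‖ = (u * TB).re := by
      rw [norm_mul, huabs, one_mul, habs_eq]
    have hImB : (u * TB).im = 0 := by
      have hsq := Complex.sq_norm (u * TB)
      rw [hmulabs, Complex.normSq_apply] at hsq
      nlinarith [sq_nonneg ((u * TB).im)]
    have hImB' : (u * TB).im = (u * S).im + σ (ψ x) - σ (ψ y) := by
      rw [hTB, show u * (S - Efun N ((ψ x).val) + Efun N ((ψ y).val))
          = u * S - u * Efun N ((ψ x).val) + u * Efun N ((ψ y).val) from by ring]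
      rw [Complex.add_im, Complex.sub_im, hσ, hσ]
      ring
    have hσeq : σ (ψ x) = σ (ψ y) := by
      rw [hImB, hImA] at hImB'
      linarith
    have hterm : u * Efun N ((ψ x).val) = u * Efun N ((ψ y).val) := by
      apply Complex.ext
      · rw [hρ, hρ, heq]
      · rw [hσ, hσ, hσeq]
    have hterm2 : Efun N ((ψ x).val) = Efun N ((ψ y).val) := mul_left_cancel₀ hupos hterm
    have hvals : (ψ x).val = (ψ y).val :=
      Efun_inj N hNne _ _ (ZMod.val_lt _) (ZMod.val_lt _) hterm2
    calc ψ x = (((ψ x).val : ℕ) : ZMod N) := (zmod_cast_self _).symm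
      _ = (((ψ y).val : ℕ) : ZMod N) := by rw [hvals]
      _ = ψ y := zmod_cast_self _
  -- strict comparison on fibers
  set m : ZMod N → ℕ := fun j => cnt A j with hmdef
  have ST : ∀ j j' : ZMod N, j ≠ j' → 0 < m j → m j' < g → Dfun N s j < Dfun N s j' := by
    intro j j' hne hmj hmj'
    obtain ⟨x, hxmem⟩ := Finset.card_pos.mp hmj
    have hxA : x ∈ A := (Finset.mem_filter.mp hxmem).1
    have hxψ : ψ x = j := (Finset.mem_filter.mp hxmem).2
    have hnsub : ¬ ((Finset.univ.filter fun k => ψ k = j') ⊆ A.filter fun k => ψ k = j') := by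
      intro hsub
      have h1 := Finset.card_le_card hsub
      rw [hfiber j'] at h1
      have h2 : (A.filter fun k => ψ k = j').card < g := hmj'
      omega
    obtain ⟨y, hy1, hy2⟩ := Finset.not_subset.mp hnsub
    have hyψ : ψ y = j' := (Finset.mem_filter.mp hy1).2
    have hyA : y ∉ A := fun h => hy2 (Finset.mem_filter.mpr ⟨h, hyψ⟩)
    obtain ⟨hle, heq⟩ := SW x hxA y hyA
    rw [hxψ, hyψ] at hle heq
    have hstrict : ρ j' < ρ j := by
      rcases lt_or_eq_of_le hle with h|h
      · exact h
      · exact absurd (heq h) hne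
    rw [hρD, hρD] at hstrict
    exact (cos_two_pi_lt_iff _ _ (Dfun_mem N s j') (Dfun_mem N s j)).mp hstrict
  -- all counts are 0 or g
  have CL1 : ∀ j, m j = 0 ∨ m j = g := by
    by_contra hcon
    push_neg at hcon
    obtain ⟨j₀, hj₀0, hj₀g⟩ := hcon
    have hj₀lt : m j₀ < g := lt_of_le_of_ne (hcnt_le A j₀) hj₀g
    have hj₀pos : 0 < m j₀ := Nat.pos_of_ne_zero hj₀0
    have huniq : ∀ j, j ≠ j₀ → m j = 0 ∨ m j = g := by
      intro j hne
      by_contra hj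
      push_neg at hj
      have h1 : 0 < m j := Nat.pos_of_ne_zero hj.1
      have h2 : m j < g := lt_of_le_of_ne (hcnt_le A j) hj.2
      have := ST j j₀ hne h1 hj₀lt
      have := ST j₀ j (Ne.symm hne) hj₀pos h2
      linarith
    have hdvd : g ∣ ∑ j ∈ Finset.univ.erase j₀, m j := by
      apply Finset.dvd_sum
      intro j hj
      rcases huniq j (Finset.ne_of_mem_erase hj) with h|h
      · simp [h]
      · simp [h]
    have htot : ∑ j ∈ Finset.univ.erase j₀, m j + m j₀ = n * g := by
      rw [Finset.sum_erase_add _ _ (Finset.mem_univ j₀)]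
      have : ∑ j : ZMod N, m j = A.card := hcnt_sum A
      rw [this, hA.1]
    obtain ⟨q, hq⟩ := hdvd
    have hmj₀ : m j₀ = n * g - g * q := by omega
    have : g ∣ m j₀ := by
      rw [hmj₀]
      exact Nat.dvd_sub ⟨n, by ring⟩ ⟨q, rfl⟩
    have := Nat.le_of_dvd hj₀pos this
    omega
  -- the support F
  set F : Finset (ZMod N) := Finset.univ.filter (fun j => m j = g) with hFdef
  have hsum_split := Finset.sum_filter_add_sum_filter_not Finset.univ (fun j => m j = g) m
  have hzero : ∑ j ∈ Finset.univ.filter (fun j => ¬ m j = g), m j = 0 := by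
    apply Finset.sum_eq_zero
    intro j hj
    rcases CL1 j with h|h
    · exact h
    · exact absurd h (Finset.mem_filter.mp hj).2
  have hsumF : ∑ j ∈ F, m j = n * g := by
    rw [hFdef]
    have := hsum_split
    rw [hzero, add_zero] at this
    rw [this, hmdef, hcnt_sum A, hA.1]
  have hsumF' : ∑ j ∈ F, m j = F.card * g := by
    rw [Finset.sum_congr rfl (fun j hj => (Finset.mem_filter.mp hj).2), Finset.sum_const,
      smul_eq_mul]
  have hFcard : F.card = n := by
    have : F.card * g = n * g := by rw [← hsumF', hsumF]
    exact Nat.eq_of_mul_eq_mul_right hg this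
  have hFprop : ∀ j ∈ F, ∀ j' ∉ F, Dfun N s j < Dfun N s j' := by
    intro j hj j' hj'
    have hne : j ≠ j' := fun h => hj' (h ▸ hj)
    have h1 : 0 < m j := by
      have := (Finset.mem_filter.mp hj).2
      omega
    have h2 : m j' < g := by
      have : m j' ≠ g := fun h => hj' (Finset.mem_filter.mpr ⟨Finset.mem_univ _, h⟩)
      rcases CL1 j' with h|h
      · omega
      · exact absurd h this
    exact ST j j' hne h1 h2
  obtain ⟨w, hw⟩ := arc_of_min N n hn1 hnN s F hFcard hFprop
  refine ⟨w, fun k => ?_⟩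
  constructor
  · intro hk
    have hpos : 0 < m (ψ k) :=
      Finset.card_pos.mpr ⟨k, Finset.mem_filter.mpr ⟨hk, rfl⟩⟩
    have hmg : m (ψ k) = g := by
      rcases CL1 (ψ k) with h|h
      · omega
      · exact h
    have : ψ k ∈ F := Finset.mem_filter.mpr ⟨Finset.mem_univ _, hmg⟩
    exact (hw (ψ k)).mp this
  · intro hval
    have hFmem : ψ k ∈ F := (hw (ψ k)).mpr hval
    have hmg : m (ψ k) = g := (Finset.mem_filter.mp hFmem).2
    have heqf : A.filter (fun k' => ψ k' = ψ k) = Finset.univ.filter (fun k' => ψ k' = ψ k) := by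
      apply Finset.eq_of_subset_of_card_le (Finset.filter_subset_filter _ (Finset.subset_univ A))
      rw [hfiber]
      have hmg' : (A.filter (fun k' => ψ k' = ψ k)).card = g := hmg
      omega
    have : k ∈ Finset.univ.filter (fun k' => ψ k' = ψ k) :=
      Finset.mem_filter.mpr ⟨Finset.mem_univ _, rfl⟩
    rw [← heqf] at this
    exact (Finset.mem_filter.mp this).1

open Finset

lemma strictMono_fin_lower {d : ℕ} (f : Fin d → ℕ) (hf : StrictMono f) :
    ∀ k (h : k < d), k ≤ f ⟨k, h⟩ := by
  intro k
  induction k with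
  | zero => intro h; exact Nat.zero_le _
  | succ k ih =>
    intro h
    have hk : k < d := by omega
    have h1 := ih hk
    have h2 : f ⟨k, hk⟩ < f ⟨k+1, h⟩ := hf (by simp [Fin.lt_def])
    omega

lemma strictMono_fin_eq {d : ℕ} (f : Fin d → ℕ) (hf : StrictMono f)
    (hub : ∀ i, f i < d) : ∀ i : Fin d, f i = (i : ℕ) := by
  have upper : ∀ m, ∀ (h : m < d), f ⟨d - 1 - m, by omega⟩ ≤ d - 1 - m := by
    intro m
    induction m with
    | zero => intro h; have := hub ⟨d - 1 - 0, by omega⟩; omega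
    | succ m ih =>
      intro h
      have hm : m < d := by omega
      have h1 := ih hm
      have h2 : f ⟨d - 1 - (m+1), by omega⟩ < f ⟨d - 1 - m, by omega⟩ :=
        hf (by simp [Fin.lt_def]; omega)
      omega
  intro i
  have h1 := strictMono_fin_lower f hf i.val i.isLt
  simp only [Fin.eta] at h1
  have hm : d - 1 - i.val < d := by have := i.isLt; omega
  have h2' : f i ≤ i.val := by
    have h2 := upper (d - 1 - i.val) hm
    have e1 : (⟨d - 1 - (d - 1 - i.val), by omega⟩ : Fin d) = i :=
      Fin.ext (by simp; have := i.isLt; omega)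
    rw [e1] at h2
    have e2 : d - 1 - (d - 1 - i.val) = i.val := by have := i.isLt; omega
    rw [e2] at h2
    exact h2
  omega

lemma delta_bounds (n N g Q R δs r j : ℕ) (hn1 : 1 ≤ n) (hnN : n < N) (hg : 0 < g)
    (hj : j < n) (hNQR : n * Q + R = N) (hRn : R < n)
    (hPM : n * δs + r = N - j + (n - 1)) (hr : r < n) (hd2 : 2 ≤ n * g) :
    N - j ≤ n * δs ∧ n * δs ≤ N - j + n - 1 ∧ 1 ≤ δs ∧ Q ≤ δs ∧ δs ≤ Q + 1 ∧
    (R = 0 → δs = Q) ∧ δs < N * g := by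
  have hlow : N - j ≤ n * δs := by omega
  have hhigh : n * δs ≤ N - j + n - 1 := by omega
  have h1 : 1 ≤ δs := by
    rcases Nat.eq_zero_or_pos δs with h|h
    · rw [h, Nat.mul_zero] at hlow; omega
    · exact h
  have hQle : Q ≤ δs := by
    by_contra h
    push_neg at h
    have h1' : δs + 1 ≤ Q := by omega
    have := Nat.mul_le_mul_left n h1'
    rw [Nat.mul_add, Nat.mul_one] at this
    omega
  have hQge : δs ≤ Q + 1 := by
    by_contra h
    push_neg at h
    have h1' : Q + 2 ≤ δs := by omega
    have := Nat.mul_le_mul_left n h1'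
    rw [Nat.mul_add] at this
    omega
  have hR0 : R = 0 → δs = Q := by
    intro hR
    by_contra h
    have h1' : Q + 1 ≤ δs := by omega
    have := Nat.mul_le_mul_left n h1'
    rw [Nat.mul_add, Nat.mul_one] at this
    omega
  refine ⟨hlow, hhigh, h1, hQle, hQge, hR0, ?_⟩
  rcases Nat.lt_or_ge g 2 with hg1|hg2
  · have hg1' : g = 1 := by omega
    subst hg1'
    have hn2 : 2 ≤ n := by omega
    rcases Nat.lt_or_ge Q 2 with hQ2|hQ2
    · rcases Nat.eq_zero_or_pos Q with h|h
      · omega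
      · have hQ1' : Q = 1 := by omega
        subst hQ1'
        omega
    · have h2Q : 2 * Q ≤ n * Q := Nat.mul_le_mul_right Q hn2
      omega
  · have hNg : N * 2 ≤ N * g := Nat.mul_le_mul_left N hg2
    have hQN : Q ≤ n * Q := Nat.le_mul_of_pos_left Q (by omega)
    omega

lemma add_natCast_val {c : ℕ} [NeZero c] (x : ZMod c) (t : ℕ) :
    x + (t : ZMod c) = ((x.val + t : ℕ) : ZMod c) := by
  rw [Nat.cast_add, zmod_cast_self]

/-- (Myhill property) List the elements of a maximally even set `A` of cardinality `d`
as `a 0, …, a (d-1)`, increasing with respect to the canonical representatives, and let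
`g i = a ((i+1) mod d) - a i` be the cyclic gaps. Then there are at most two distinct
gaps, and exactly one iff `d ∣ c`. -/
theorem myhill (c d : ℕ) [NeZero c] (hd1 : 1 ≤ d) (hdc : d ≤ c)
    (A : Finset (ZMod c)) (hA : MaximallyEven c d A)
    (a : Fin d → ZMod c) (ha_mem : ∀ i, a i ∈ A)
    (ha_mono : StrictMono (fun i => (a i).val)) :
    ((Finset.univ : Finset (Fin d)).image
        (fun i : Fin d =>
          a ⟨(i.val + 1) % d, Nat.mod_lt _ hd1⟩ - a i)).card ≤ 2 ∧
    (((Finset.univ : Finset (Fin d)).image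
        (fun i : Fin d =>
          a ⟨(i.val + 1) % d, Nat.mod_lt _ hd1⟩ - a i)).card = 1 ↔ d ∣ c) := by
  classical
  haveI : Nonempty (Fin d) := ⟨⟨0, by omega⟩⟩
  set gap : Fin d → ZMod c := fun i => a ⟨(i.val + 1) % d, Nat.mod_lt _ hd1⟩ - a i with hgapdef
  set Gaps : Finset (ZMod c) := Finset.univ.image gap with hGapsdef
  have hGne : Gaps.Nonempty := Finset.image_nonempty.mpr Finset.univ_nonempty
  by_cases hdc' : d = c
  · -- case d = c : all gaps are 1
    subst hdc'
    have hval : ∀ i : Fin d, (a i).val = i.val :=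
      strictMono_fin_eq _ ha_mono (fun i => ZMod.val_lt (a i))
    have hgap1 : ∀ i : Fin d, gap i = (1 : ZMod d) := by
      intro i
      have h1 : a ⟨(i.val + 1) % d, Nat.mod_lt _ hd1⟩
          = ((((i.val + 1) % d : ℕ)) : ZMod d) := by
        conv_lhs => rw [← zmod_cast_self (a ⟨(i.val + 1) % d, Nat.mod_lt _ hd1⟩)]
        rw [hval ⟨(i.val + 1) % d, Nat.mod_lt _ hd1⟩]
      have h2 : a i = ((i.val : ℕ) : ZMod d) := by
        conv_lhs => rw [← zmod_cast_self (a i)]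
        rw [hval i]
      show a ⟨(i.val + 1) % d, Nat.mod_lt _ hd1⟩ - a i = (1 : ZMod d)
      rw [h1, h2, ZMod.natCast_mod]
      push_cast
      ring
    have hGaps : Gaps = {(1 : ZMod d)} := by
      apply Finset.Subset.antisymm
      · intro x hx
        obtain ⟨i, _, hi⟩ := Finset.mem_image.mp hx
        rw [← hi, hgap1 i]
        exact Finset.mem_singleton_self _
      · intro x hx
        rw [Finset.mem_singleton] at hx
        subst hx
        exact Finset.mem_image.mpr ⟨⟨0, by omega⟩, Finset.mem_univ _, hgap1 _⟩
    rw [hGaps]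
    simp
  · have hdlt : d < c := lt_of_le_of_ne hdc hdc'
    by_cases hd1' : d = 1
    · -- case d = 1 : the single gap is 0
      subst hd1'
      have hgap0 : ∀ i : Fin 1, gap i = 0 := by
        intro i
        have h : (⟨(i.val + 1) % 1, Nat.mod_lt _ hd1⟩ : Fin 1) = i := Subsingleton.elim _ _
        show a ⟨(i.val + 1) % 1, Nat.mod_lt _ hd1⟩ - a i = 0
        rw [h, sub_self]
      have hGaps : Gaps = {(0 : ZMod c)} := by
        apply Finset.Subset.antisymm
        · intro x hx
          obtain ⟨i, _, hi⟩ := Finset.mem_image.mp hx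
          rw [← hi, hgap0 i]
          exact Finset.mem_singleton_self _
        · intro x hx
          rw [Finset.mem_singleton] at hx
          subst hx
          exact Finset.mem_image.mpr ⟨⟨0, by omega⟩, Finset.mem_univ _, hgap0 _⟩
      rw [hGaps]
      simp
    · -- main case : 2 ≤ d < c
      have hd2 : 2 ≤ d := by omega
      have hdpos : 0 < d := by omega
      set g : ℕ := d.gcd c with hgdef
      have hg : 0 < g := Nat.gcd_pos_of_pos_left c (by omega)
      set n : ℕ := d / g with hndef
      set N : ℕ := c / g with hNdef
      have hdg : d = n * g := (Nat.div_mul_cancel (Nat.gcd_dvd_left d c)).symm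
      have hcg : c = N * g := (Nat.div_mul_cancel (Nat.gcd_dvd_right d c)).symm
      have hn1 : 1 ≤ n := by
        rcases Nat.eq_zero_or_pos n with h|h
        · rw [h] at hdg; omega
        · exact h
      have hnN : n < N := Nat.div_lt_div_of_lt_of_dvd (Nat.gcd_dvd_right d c) hdlt
      have hN2 : 2 ≤ N := by omega
      have hco : n.Coprime N := Nat.coprime_div_gcd_div_gcd hg
      haveI : NeZero N := ⟨by omega⟩
      clear_value g n N
      have hcpos : 0 < c := Nat.pos_of_ne_zero (NeZero.ne c)
      obtain ⟨w, hw⟩ := arc_structure c N g n hcg hg hn1 hnN hco A (hdg ▸ hA)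
      -- membership test via residues
      set J : ZMod c → ℕ := fun k => (((n * k.val : ℕ) : ZMod N) - w).val with hJdef
      have hJlt : ∀ k, J k < N := fun k => ZMod.val_lt _
      have hNdvdc : N ∣ c := ⟨g, hcg⟩
      have hMEM : ∀ (k : ZMod c) (δ : ℕ), (k + (δ : ZMod c)) ∈ A ↔ (J k + n * δ) % N < n := by
        intro k δ
        have hkd : (k + (δ : ZMod c)) = ((k.val + δ : ℕ) : ZMod c) := add_natCast_val k δ
        have hvm : (k + (δ : ZMod c)).val ≡ k.val + δ [MOD N] := by
          rw [hkd, ZMod.val_natCast]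
          exact (Nat.mod_modEq _ _).of_dvd hNdvdc
        have hcast : ((n * (k + (δ : ZMod c)).val : ℕ) : ZMod N)
            = ((n * k.val + n * δ : ℕ) : ZMod N) := by
          rw [ZMod.natCast_eq_natCast_iff]
          calc n * (k + (δ : ZMod c)).val ≡ n * (k.val + δ) [MOD N] := hvm.mul_left n
            _ = n * k.val + n * δ := by ring
        have harg : ((n * (k + (δ : ZMod c)).val : ℕ) : ZMod N) - w
            = ((J k + n * δ : ℕ) : ZMod N) := by
          rw [hcast]
          have : ((J k : ℕ) : ZMod N) = ((n * k.val : ℕ) : ZMod N) - w := zmod_cast_self _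
          push_cast
          push_cast at this
          rw [this]
          ring
        rw [hw (k + (δ : ZMod c))]
        constructor
        · intro h
          rw [harg, ZMod.val_natCast] at h
          exact h
        · intro h
          rw [harg, ZMod.val_natCast]
          exact h
      -- arithmetic of the minimal step
      set Q : ℕ := N / n with hQdef
      set R : ℕ := N % n with hRdef
      have hNQR : n * Q + R = N := Nat.div_add_mod N n
      have hRn : R < n := Nat.mod_lt _ (by omega)
      have hQ1 : 1 ≤ Q := (Nat.one_le_div_iff (by omega)).mpr (by omega)
      clear_value Q R
      -- key gap lemma
      have GK : ∀ i : Fin d, ∃ δ : ℕ,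
          gap i = (δ : ZMod c) ∧ Q ≤ δ ∧ δ ≤ Q + 1 ∧ (R = 0 → δ = Q) ∧ δ < c := by
        intro i
        -- the canonical step from a i
        have hkA : a i ∈ A := ha_mem i
        have hj : J (a i) < n := (hw (a i)).mp hkA
        obtain ⟨j, hjdef⟩ : ∃ j, J (a i) = j := ⟨_, rfl⟩
        rw [hjdef] at hj
        obtain ⟨δs, r, hPM, hmr⟩ : ∃ δs r, n * δs + r = N - j + (n - 1) ∧ r < n :=
          ⟨(N - j + (n - 1)) / n, (N - j + (n - 1)) % n, Nat.div_add_mod _ _,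
            Nat.mod_lt _ (by omega)⟩
        obtain ⟨hlowP, hhighP, hδs1, hδsQ, hδsQ1, hδsR0, hδsc'⟩ :=
          delta_bounds n N g Q R δs r j hn1 hnN hg hj hNQR hRn hPM hmr (hdg ▸ hd2)
        have hδsc : δs < c := by rw [hcg]; exact hδsc'
        -- membership at δs
        have hmem_δs : (J (a i) + n * δs) % N < n := by
          rw [hjdef]
          have h1 : N ≤ j + n * δs := by omega
          have h3 : j + n * δs - N < N := by omega
          rw [Nat.mod_eq_sub_mod h1, Nat.mod_eq_of_lt h3]
          omega
        -- no membership strictly below δs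
        have hno_below : ∀ δ', 0 < δ' → δ' < δs → ¬ ((J (a i) + n * δ') % N < n) := by
          intro δ' h0 hlt
          rw [hjdef]
          have hP'l : n ≤ n * δ' := Nat.le_mul_of_pos_right n h0
          have hP'h : n * δ' + n ≤ n * δs := by
            have h1 : δ' + 1 ≤ δs := by omega
            have := Nat.mul_le_mul_left n h1
            rw [Nat.mul_add, Nat.mul_one] at this
            exact this
          have hsm : j + n * δ' < N := by omega
          rw [Nat.mod_eq_of_lt hsm]
          omega
        -- now compare with the enumeration step
        -- every element of A is in the image of a
        have hinj : Function.Injective a := fun i1 i2 h =>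
          ha_mono.injective (congrArg ZMod.val h)
        have himage : Finset.univ.image a = A := by
          apply Finset.eq_of_subset_of_card_le
          · intro x hx
            obtain ⟨i', _, hi'⟩ := Finset.mem_image.mp hx
            rw [← hi']
            exact ha_mem i'
          · rw [hA.1, Finset.card_image_of_injective _ hinj, Finset.card_univ,
              Fintype.card_fin]
        have hcov : ∀ x ∈ A, ∃ i' : Fin d, a i' = x := by
          intro x hx
          rw [← himage] at hx
          obtain ⟨i', _, hi'⟩ := Finset.mem_image.mp hx
          exact ⟨i', hi'⟩
        -- the enumeration step δi
        have hNEXT : ∃ δi : ℕ, 0 < δi ∧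
            a ⟨(i.val + 1) % d, Nat.mod_lt _ hd1⟩ = a i + (δi : ZMod c) ∧
            (∀ δ', 0 < δ' → δ' < δi → (a i + (δ' : ZMod c)) ∉ A) := by
          rcases Nat.lt_or_ge (i.val + 1) d with hi1|hi1
          · -- interior step
            set i' : Fin d := ⟨i.val + 1, hi1⟩ with hi'def
            have hidx : (⟨(i.val + 1) % d, Nat.mod_lt _ hd1⟩ : Fin d) = i' :=
              Fin.ext (by show (i.val + 1) % d = i.val + 1; exact Nat.mod_eq_of_lt hi1)
            have hlt : (a i).val < (a i').val := ha_mono (Fin.lt_def.mpr (by show i.val < i.val + 1; omega))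
            refine ⟨(a i').val - (a i).val, by omega, ?_, ?_⟩
            · rw [hidx, add_natCast_val (a i) _]
              have h5 : (a i).val + ((a i').val - (a i).val) = (a i').val := by omega
              rw [h5, zmod_cast_self]
            · intro δ' h0 hδ' hmem
              have hxval : (a i + (δ' : ZMod c)).val = (a i).val + δ' := by
                rw [add_natCast_val (a i) δ', ZMod.val_natCast, Nat.mod_eq_of_lt]
                have := ZMod.val_lt (a i')
                omega
              obtain ⟨m, hm⟩ := hcov _ hmem
              have hmval : (a m).val = (a i).val + δ' := by rw [hm, hxval]
              rcases le_or_gt m i with hmi|hmi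
              · have : (a m).val ≤ (a i).val := ha_mono.le_iff_le.mpr hmi
                omega
              · have hi'm : i' ≤ m := by
                  rw [Fin.le_def]
                  rw [Fin.lt_def] at hmi
                  simp [hi'def]
                  omega
                have : (a i').val ≤ (a m).val := ha_mono.le_iff_le.mpr hi'm
                omega
          · -- wrap-around step
            have hival : i.val = d - 1 := by have := i.isLt; omega
            set i0 : Fin d := ⟨0, by omega⟩ with hi0def
            have hd11 : d - 1 + 1 = d := by omega
            have hidx : (⟨(i.val + 1) % d, Nat.mod_lt _ hd1⟩ : Fin d) = i0 :=
              Fin.ext (by simp [hi0def, hival, hd11, Nat.mod_self])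
            have hi0i : i0 < i := by
              rw [Fin.lt_def]
              simp [hi0def, hival]
              omega
            have hlt : (a i0).val < (a i).val := ha_mono hi0i
            have hvc : (a i).val < c := ZMod.val_lt _
            refine ⟨c - (a i).val + (a i0).val, by omega, ?_, ?_⟩
            · rw [hidx, add_natCast_val (a i) _]
              have h5 : (a i).val + (c - (a i).val + (a i0).val) = c + (a i0).val := by omega
              rw [h5, Nat.cast_add, ZMod.natCast_self, zero_add, zmod_cast_self]
            · intro δ' h0 hδ' hmem
              obtain ⟨m, hm⟩ := hcov _ hmem
              have hmax : ∀ m' : Fin d, (a m').val ≤ (a i).val := by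
                intro m'
                apply ha_mono.le_iff_le.mpr
                rw [Fin.le_def]
                have := m'.isLt
                omega
              have hmin : ∀ m' : Fin d, (a i0).val ≤ (a m').val := by
                intro m'
                apply ha_mono.le_iff_le.mpr
                rw [Fin.le_def]
                simp [hi0def]
              have hxval : (a i + (δ' : ZMod c)).val = ((a i).val + δ') % c := by
                rw [add_natCast_val (a i) δ', ZMod.val_natCast]
              rcases Nat.lt_or_ge ((a i).val + δ') c with hcase|hcase
              · have : (a i + (δ' : ZMod c)).val = (a i).val + δ' := by
                  rw [hxval, Nat.mod_eq_of_lt hcase]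
                have := hmax m
                rw [hm] at this
                omega
              · have hsub : ((a i).val + δ') % c = (a i).val + δ' - c := by
                  rw [Nat.mod_eq_sub_mod hcase, Nat.mod_eq_of_lt]
                  have := ZMod.val_lt (a i0)
                  omega
                have : (a i + (δ' : ZMod c)).val = (a i).val + δ' - c := by rw [hxval, hsub]
                have h2 := hmin m
                rw [hm] at h2
                omega
        obtain ⟨δi, hδi0, hδistep, hδimin⟩ := hNEXT
        -- δi = δs
        have hmemA_δs : (a i + (δs : ZMod c)) ∈ A := (hMEM (a i) δs).mpr hmem_δs
        have hmemA_δi : (a i + (δi : ZMod c)) ∈ A := by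
          rw [← hδistep]
          exact ha_mem _
        have h1 : ¬ (δi < δs) := fun h => hno_below δi hδi0 h ((hMEM (a i) δi).mp hmemA_δi)
        have h2 : ¬ (δs < δi) := fun h => hδimin δs (by omega) h hmemA_δs
        have hδieq : δi = δs := by omega
        refine ⟨δs, ?_, hδsQ, hδsQ1, hδsR0, hδsc⟩
        show a ⟨(i.val + 1) % d, Nat.mod_lt _ hd1⟩ - a i = (δs : ZMod c)
        rw [hδistep, hδieq]
        ring
      -- conclusions
      have hQc : Q < c := by
        obtain ⟨δ, _, h1, h2, _, h3⟩ := GK ⟨0, by omega⟩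
        omega
      have hsub2 : Gaps ⊆ {((Q : ℕ) : ZMod c), ((Q + 1 : ℕ) : ZMod c)} := by
        intro x hx
        obtain ⟨i, _, hi⟩ := Finset.mem_image.mp hx
        obtain ⟨δ, hδeq, h1, h2, _, _⟩ := GK i
        rw [← hi, hδeq]
        rcases Nat.eq_or_lt_of_le h1 with h|h
        · rw [← h]
          exact Finset.mem_insert_self _ _
        · have : δ = Q + 1 := by omega
          rw [this]
          exact Finset.mem_insert_of_mem (Finset.mem_singleton_self _)
      constructor
      · calc Gaps.card ≤ _ := Finset.card_le_card hsub2
          _ ≤ 2 := by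
            apply le_trans (Finset.card_insert_le _ _)
            simp
      · constructor
        · -- card = 1 → d ∣ c
          intro hcard1
          obtain ⟨γ, hγ⟩ := Finset.card_eq_one.mp hcard1
          have hallγ : ∀ i : Fin d, gap i = γ := by
            intro i
            have : gap i ∈ Gaps := Finset.mem_image.mpr ⟨i, Finset.mem_univ _, rfl⟩
            rw [hγ, Finset.mem_singleton] at this
            exact this
          obtain ⟨δ₀, hδ₀eq, hδ₀1, hδ₀2, hδ₀R, hδ₀c⟩ := GK ⟨0, by omega⟩
          have hallδ : ∀ i : Fin d, gap i = ((δ₀ : ℕ) : ZMod c) := by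
            intro i
            rw [hallγ i, ← hallγ ⟨0, by omega⟩, hδ₀eq]
          -- sum of gaps is zero
          have hbij : Function.Bijective
              (fun i : Fin d => (⟨(i.val + 1) % d, Nat.mod_lt _ hd1⟩ : Fin d)) := by
            rw [Fintype.bijective_iff_injective_and_card]
            refine ⟨?_, rfl⟩
            intro i1 i2 h
            have hv : (i1.val + 1) % d = (i2.val + 1) % d := congrArg Fin.val h
            have h1 := i1.isLt
            have h2 := i2.isLt
            apply Fin.ext
            rcases Nat.lt_or_ge (i1.val + 1) d with ha1|ha1 <;>
              rcases Nat.lt_or_ge (i2.val + 1) d with ha2|ha2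
            · rw [Nat.mod_eq_of_lt ha1, Nat.mod_eq_of_lt ha2] at hv
              omega
            · have : i2.val + 1 = d := by omega
              rw [Nat.mod_eq_of_lt ha1, this, Nat.mod_self] at hv
              omega
            · have : i1.val + 1 = d := by omega
              rw [this, Nat.mod_self, Nat.mod_eq_of_lt ha2] at hv
              omega
            · omega
          have hsum0 : ∑ i : Fin d, gap i = 0 := by
            rw [hgapdef]
            simp only []
            rw [Finset.sum_sub_distrib]
            rw [Fintype.sum_bijective _ hbij
              (fun i => a ⟨(i.val + 1) % d, Nat.mod_lt _ hd1⟩) a (fun i => rfl)]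
            ring
          have hsumδ : ∑ i : Fin d, gap i = ((d * δ₀ : ℕ) : ZMod c) := by
            rw [Finset.sum_congr rfl (fun i _ => hallδ i), Finset.sum_const,
              Finset.card_univ, Fintype.card_fin, nsmul_eq_mul]
            push_cast
            ring
          have hdvd : c ∣ d * δ₀ := by
            rw [← ZMod.natCast_eq_zero_iff]
            rw [← hsumδ, hsum0]
          obtain ⟨kk, hkk⟩ := hdvd
          have hdQpos : 0 < d * δ₀ := Nat.mul_pos hdpos (by omega)
          rcases Nat.eq_or_lt_of_le hδ₀1 with hv|hv
          · -- δ₀ = Q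
            have hidA : d * δ₀ + g * R = c := by
              rw [← hv, hdg, hcg, ← hNQR]
              ring
            have hkk1 : 1 ≤ kk := by
              rcases Nat.eq_zero_or_pos kk with h|h
              · rw [h, Nat.mul_zero] at hkk; omega
              · exact h
            have : c ≤ c * kk := Nat.le_mul_of_pos_right c hkk1
            have hgR0 : g * R = 0 := by omega
            have hR0 : R = 0 := by
              rcases Nat.mul_eq_zero.mp hgR0 with h|h
              · omega
              · exact h
            have hR0' : N % n = 0 := by rw [hRdef] at hR0; exact hR0
            have : n ∣ N := Nat.dvd_of_mod_eq_zero hR0'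
            rw [hdg, hcg]
            exact mul_dvd_mul_right this g
          · -- δ₀ = Q + 1 : contradiction
            exfalso
            have hδ₀v : δ₀ = Q + 1 := by omega
            have hidB : d * δ₀ + g * R = c + d := by
              rw [hδ₀v, hdg, hcg, ← hNQR]
              ring
            have hgRd : g * R < d := by
              have h1 : g * R < g * n := (Nat.mul_lt_mul_left hg).mpr hRn
              have h2 : g * n = d := by rw [hdg]; ring
              omega
            rcases Nat.lt_or_ge kk 2 with hkk2|hkk2
            · interval_cases kk
              · rw [Nat.mul_zero] at hkk; omega
              · rw [Nat.mul_one] at hkk; omega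
            · have : c * 2 ≤ c * kk := Nat.mul_le_mul_left c hkk2
              omega
        · -- d ∣ c → card = 1
          intro hdvd
          have hnN' : n ∣ N := by
            have : n * g ∣ N * g := by rw [← hdg, ← hcg]; exact hdvd
            exact (Nat.mul_dvd_mul_iff_right hg).mp this
          have hR0 : R = 0 := by
            obtain ⟨q, hq⟩ := hnN'
            rw [hRdef, hq, Nat.mul_mod_right]
          have hsubQ : Gaps ⊆ {((Q : ℕ) : ZMod c)} := by
            intro x hx
            obtain ⟨i, _, hi⟩ := Finset.mem_image.mp hx
            obtain ⟨δ, hδeq, _, _, hδR, _⟩ := GK i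
            rw [← hi, hδeq, hδR hR0]
            exact Finset.mem_singleton_self _
          rcases Finset.subset_singleton_iff.mp hsubQ with h|h
          · rw [h] at hGne
            exact absurd hGne Finset.not_nonempty_empty
          · rw [h, Finset.card_singleton]
end

section
/- (Cardinality equals variety, Clough–Myerson) Let c, d be positive integers with gcd(c,d) = 1 and d ≤ c, and let a : ℤ → ℤ be given by a(i) = ⌊i·c/d⌋, so that (a(i) mod c) enumerates a maximally even set of cardinality d. For 1 ≤ k < d, consider for each i ∈ {0, …, d-1} the difference vector D_i : Fin k → ZMod c, D_i(j) = ((a(i+j) - a(i) : ℤ) : ZMod c); two length-k subsequences (a(i), …, a(i+k-1)) and (a(i'), …, a(i'+k-1)) are translates of each other in ZMod c exactly when D_i = D_{i'}. Then the set {D_i : i = 0, …, d-1} has exactly k elements; i.e., the d subsequences of k consecutive notes fall into exactly k translation classes. -/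
/-- The Clough–Myerson enumeration `a i = ⌊i·c/d⌋` of a maximally even set. -/
def cloughMyerson (c d : ℕ) : ℤ → ℤ := fun i => ⌊((i : ℚ) * c) / d⌋


lemma cm_nat (c d : ℕ) (i : ℕ) : cloughMyerson c d (i : ℤ) = ((i * c) / d : ℕ) := by
  unfold cloughMyerson
  rw [show ((((i:ℕ):ℤ) : ℚ) * c) = (((i * c : ℕ) : ℤ) : ℚ) by push_cast; ring,
    Rat.floor_intCast_div_natCast]
  exact_mod_cast (Int.natCast_div _ _).symm

lemma nat_div_split (c d : ℕ) (hd : 0 < d) (i j : ℕ) :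
    (i + j) * c / d = i * c / d + (j * c + i * c % d) / d := by
  conv_lhs => rw [add_mul, ← Nat.div_add_mod (i*c) d]
  rw [add_assoc, Nat.mul_add_div hd, add_comm (i*c%d) (j*c)]

lemma val_formula (c d : ℕ) (hd : 0 < d) (j r : ℕ) (hr : r < d) :
    (j * c + r) / d = j * c / d + (if d ≤ j * c % d + r then 1 else 0) := by
  conv_lhs => rw [← Nat.div_add_mod (j*c) d]
  rw [add_assoc, Nat.mul_add_div hd]
  congr 1
  have h2 : j * c % d < d := Nat.mod_lt _ hd
  split
  · next h => exact Nat.div_eq_of_lt_le (by omega) (by omega)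
  · next h => exact Nat.div_eq_of_lt (by omega)

def Gfun (c d k : ℕ) (r : ℕ) : Fin k → ZMod c := fun j => (((j : ℕ) * c + r) / d : ℕ)

def Nfun (c d k : ℕ) (r : ℕ) : ℕ :=
  ((Finset.range k).filter (fun j => d ≤ j * c % d + r)).card

lemma s_inj (c d k : ℕ) (hgcd : Nat.gcd c d = 1) (hkd : k ≤ d) :
    ∀ j ∈ Finset.range k, ∀ j' ∈ Finset.range k,
    j * c % d = j' * c % d → j = j' := by
  intro j hj j' hj' h
  simp only [Finset.mem_range] at hj hj'
  have h1 : j * c ≡ j' * c [MOD d] := h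
  have : j ≡ j' [MOD d] := Nat.ModEq.cancel_right_of_coprime ((Nat.gcd_comm d c).trans hgcd) h1
  exact Nat.ModEq.eq_of_lt_of_lt this (by omega) (by omega)

lemma g_lt (c d k : ℕ) (hd : 0 < d) (hdc : d ≤ c) (hkd : k < d) :
    ∀ j < k, ∀ r < d, (j * c + r) / d < c := by
  intro j hj r hr
  rw [Nat.div_lt_iff_lt_mul hd]
  calc j * c + r < j * c + c := by omega
    _ = (j + 1) * c := by ring
    _ ≤ d * c := Nat.mul_le_mul_right c (by omega)
    _ = c * d := mul_comm d c

lemma claim1 (c d k : ℕ) (hd : 0 < d) : ∀ r < d, ∀ r' < d,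
    Nfun c d k r = Nfun c d k r' → Gfun c d k r = Gfun c d k r' := by
  have key : ∀ r r', r ≤ r' → r' < d → Nfun c d k r = Nfun c d k r' →
      Gfun c d k r = Gfun c d k r' := by
    intro r r' hle hr' hN
    have hsub : (Finset.range k).filter (fun j => d ≤ j * c % d + r) ⊆
        (Finset.range k).filter (fun j => d ≤ j * c % d + r') := by
      intro j hj
      simp only [Finset.mem_filter] at hj ⊢
      exact ⟨hj.1, by omega⟩
    have heq := Finset.eq_of_subset_of_card_le hsub (le_of_eq hN.symm)
    funext j
    have hjk : (j : ℕ) < k := j.2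
    have hmem : ((j:ℕ) ∈ (Finset.range k).filter (fun j => d ≤ j * c % d + r)) ↔
        ((j:ℕ) ∈ (Finset.range k).filter (fun j => d ≤ j * c % d + r')) := by rw [heq]
    simp only [Finset.mem_filter, Finset.mem_range, and_iff_right hjk] at hmem
    show ((((j:ℕ) * c + r) / d : ℕ) : ZMod c) = ((((j:ℕ) * c + r') / d : ℕ) : ZMod c)
    rw [val_formula c d hd _ r (by omega), val_formula c d hd _ r' hr']
    congr 1
    simp only [hmem]
  intro r hr r' hr' hN
  rcases le_total r r' with h | h
  · exact key r r' h hr' hN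
  · exact (key r' r h hr hN.symm).symm

lemma sumval (c d k : ℕ) (hd : 0 < d) (hdc : d ≤ c) (hkd : k < d) (r : ℕ) (hr : r < d) :
    ∑ j : Fin k, (Gfun c d k r j).val
      = (∑ j ∈ Finset.range k, j * c / d) + Nfun c d k r := by
  have hv : ∀ j : Fin k, (Gfun c d k r j).val = ((j:ℕ) * c + r) / d := fun j =>
    ZMod.val_cast_of_lt (g_lt c d k hd hdc hkd _ j.2 r hr)
  simp only [hv]
  rw [Fin.sum_univ_eq_sum_range (fun j => (j * c + r) / d) k]
  rw [Finset.sum_congr rfl (fun j hj => val_formula c d hd j r hr)]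
  rw [Finset.sum_add_distrib]
  congr 1
  rw [Nfun, Finset.card_filter]

lemma ivt_nat (f : ℕ → ℕ) (h0 : f 0 = 0) (hstep : ∀ t, f (t+1) ≤ f t + 1) :
    ∀ t, ∀ m ≤ f t, ∃ r ≤ t, f r = m := by
  intro t
  induction t with
  | zero => intro m hm; exact ⟨0, le_rfl, by omega⟩
  | succ t ih =>
    intro m hm
    by_cases h : m ≤ f t
    · obtain ⟨r, hr, hfr⟩ := ih m h
      exact ⟨r, by omega, hfr⟩
    · exact ⟨t+1, le_rfl, by have := hstep t; omega⟩

lemma N_step (c d k : ℕ) (hgcd : Nat.gcd c d = 1) (hkd : k ≤ d) (r : ℕ) :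
    Nfun c d k (r+1) ≤ Nfun c d k r + 1 := by
  have hsub : (Finset.range k).filter (fun j => d ≤ j * c % d + (r+1)) ⊆
      ((Finset.range k).filter (fun j => d ≤ j * c % d + r)) ∪
      ((Finset.range k).filter (fun j => j * c % d + r + 1 = d)) := by
    intro j hj
    simp only [Finset.mem_filter, Finset.mem_union, Finset.mem_range] at hj ⊢
    omega
  have hone : ((Finset.range k).filter (fun j => j * c % d + r + 1 = d)).card ≤ 1 := by
    rw [Finset.card_le_one]
    intro a ha b hb
    have ha' := Finset.mem_filter.1 ha
    have hb' := Finset.mem_filter.1 hb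
    exact s_inj c d k hgcd hkd a ha'.1 b hb'.1 (by omega)
  calc Nfun c d k (r+1) ≤ _ := Finset.card_le_card hsub
    _ ≤ _ + _ := Finset.card_union_le _ _
    _ ≤ Nfun c d k r + 1 := by exact Nat.add_le_add_left hone _  -- wrong order? Nfun + card

lemma N_zero (c d k : ℕ) (hd : 0 < d) : Nfun c d k 0 = 0 := by
  rw [Nfun, Finset.card_eq_zero, Finset.filter_eq_empty_iff]
  intro j _
  have := Nat.mod_lt (j * c) hd
  omega

lemma N_last (c d k : ℕ) (hd : 0 < d) (hgcd : Nat.gcd c d = 1) (hkd : k < d) (hk1 : 1 ≤ k) :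
    Nfun c d k (d-1) = k - 1 := by
  have hfe : (Finset.range k).filter (fun j => d ≤ j * c % d + (d-1))
      = (Finset.range k).erase 0 := by
    ext j
    simp only [Finset.mem_filter, Finset.mem_erase, Finset.mem_range]
    constructor
    · rintro ⟨hj, h⟩
      refine ⟨?_, hj⟩
      rintro rfl
      simp only [Nat.zero_mul, Nat.zero_mod] at h
      omega
    · rintro ⟨hj0, hj⟩
      refine ⟨hj, ?_⟩
      have hne : j * c % d ≠ 0 := by
        intro h
        have hdvd : d ∣ j * c := Nat.dvd_of_mod_eq_zero h
        have : d ∣ j := (Nat.Coprime.dvd_of_dvd_mul_right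
          (Nat.coprime_comm.mp hgcd) hdvd)
        have := Nat.le_of_dvd (Nat.pos_of_ne_zero hj0) this
        omega
      omega
  rw [Nfun, hfe, Finset.card_erase_of_mem (Finset.mem_range.2 (by omega)), Finset.card_range]

lemma claim2 (c d k : ℕ) (hd : 0 < d) (hgcd : Nat.gcd c d = 1) (hkd : k < d) (hk1 : 1 ≤ k) :
    (Finset.range d).image (Nfun c d k) = Finset.range k := by
  apply Finset.Subset.antisymm
  · intro x hx
    simp only [Finset.mem_image, Finset.mem_range] at hx ⊢
    obtain ⟨r, hr, rfl⟩ := hx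
    have hss : (Finset.range k).filter (fun j => d ≤ j * c % d + r) ⊂ Finset.range k := by
      refine ⟨Finset.filter_subset _ _, fun hsub => ?_⟩
      have h0 : (0:ℕ) ∈ (Finset.range k).filter (fun j => d ≤ j * c % d + r) :=
        hsub (Finset.mem_range.2 (by omega))
      simp only [Finset.mem_filter, Nat.zero_mul, Nat.zero_mod] at h0
      omega
    have := Finset.card_lt_card hss
    rwa [Finset.card_range] at this
  · intro m hm
    simp only [Finset.mem_range] at hm
    have hmle : m ≤ Nfun c d k (d-1) := by rw [N_last c d k hd hgcd hkd hk1]; omega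
    obtain ⟨r, hr, hfr⟩ := ivt_nat (Nfun c d k) (N_zero c d k hd)
      (N_step c d k hgcd (le_of_lt hkd)) (d-1) m hmle
    exact Finset.mem_image.2 ⟨r, Finset.mem_range.2 (by omega), hfr⟩

/-- (Cardinality equals variety, Clough–Myerson) For `gcd(c,d) = 1`, the map
`a i = ⌊i·c/d⌋` enumerates (mod `c`) a maximally even set of cardinality `d`.
For `1 ≤ k < d`, the `d` subsequences of `k` consecutive notes
`(a i, …, a (i+k-1))`, `i = 0, …, d-1`, fall into exactly `k` translation classes,
i.e. there are exactly `k` distinct difference vectors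
`D i = (j ↦ a (i+j) - a i) : Fin k → ZMod c`. -/
theorem cardinality_equals_variety (c d : ℕ) (hc : 0 < c) (hd : 0 < d) (hdc : d ≤ c)
    (hgcd : Nat.gcd c d = 1) (k : ℕ) (hk1 : 1 ≤ k) (hkd : k < d) :
    ((Finset.range d).image
      (fun i : ℕ => fun j : Fin k =>
        ((cloughMyerson c d ((i : ℤ) + (j : ℤ)) - cloughMyerson c d (i : ℤ) : ℤ) :
          ZMod c))).card = k := by
  classical
  -- Step 1: identify each difference vector with `Gfun` of the residue `i*c % d`
  have hfun : ∀ i : ℕ, (fun j : Fin k =>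
      ((cloughMyerson c d ((i : ℤ) + (j : ℤ)) - cloughMyerson c d (i : ℤ) : ℤ) : ZMod c))
      = Gfun c d k (i * c % d) := by
    intro i
    funext j
    have h1 : ((i : ℤ) + ((j:ℕ) : ℤ)) = ((i + (j:ℕ) : ℕ) : ℤ) := by push_cast; ring
    rw [h1, cm_nat, cm_nat]
    have h3 : ((((i + (j:ℕ)) * c / d : ℕ) : ℤ) - ((i * c / d : ℕ) : ℤ))
        = ((((j:ℕ) * c + i * c % d) / d : ℕ) : ℤ) := by
      rw [nat_div_split c d hd i (j:ℕ)]; push_cast; ring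
    rw [h3]
    exact Int.cast_natCast _
  rw [Finset.image_congr (g := fun i : ℕ => Gfun c d k (i * c % d)) (fun i _ => hfun i)]
  -- Step 2: residues range over all of `range d`
  have hρ : (Finset.range d).image (fun i => i * c % d) = Finset.range d := by
    apply Finset.eq_of_subset_of_card_le
    · intro x hx
      simp only [Finset.mem_image, Finset.mem_range] at hx ⊢
      obtain ⟨i, hi, rfl⟩ := hx
      exact Nat.mod_lt _ hd
    · rw [Finset.card_image_of_injOn (fun i hi i' hi' h =>
        s_inj c d d hgcd le_rfl i (Finset.mem_coe.1 hi) i' (Finset.mem_coe.1 hi') h)]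
  have himg2 : (Finset.range d).image (fun i => Gfun c d k (i * c % d))
      = (Finset.range d).image (Gfun c d k) := by
    conv_rhs => rw [← hρ, Finset.image_image]
    simp only [Function.comp_def]
  rw [himg2]
  -- Step 3: count via the invariant H
  have hinj : Set.InjOn (fun v : Fin k → ZMod c => ∑ j, (v j).val)
      ((Finset.range d).image (Gfun c d k)) := by
    intro x hx y hy hxy
    obtain ⟨r, hr, rfl⟩ := Finset.mem_image.1 (Finset.mem_coe.1 hx)
    obtain ⟨r', hr', rfl⟩ := Finset.mem_image.1 (Finset.mem_coe.1 hy)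
    have hrd := Finset.mem_range.1 hr
    have hrd' := Finset.mem_range.1 hr'
    apply claim1 c d k hd r hrd r' hrd'
    have e1 := sumval c d k hd hdc hkd r hrd
    have e2 := sumval c d k hd hdc hkd r' hrd'
    simp only at hxy
    omega
  rw [← Finset.card_image_of_injOn hinj, Finset.image_image]
  have himg3 : ((Finset.range d).image
        ((fun v : Fin k → ZMod c => ∑ j, (v j).val) ∘ Gfun c d k))
      = (Finset.range d).image
        (fun r => (∑ j ∈ Finset.range k, j * c / d) + Nfun c d k r) := by
    apply Finset.image_congr
    intro r hr
    exact sumval c d k hd hdc hkd r (Finset.mem_range.1 hr)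
  rw [himg3]
  have himg4 : (Finset.range d).image
        (fun r => (∑ j ∈ Finset.range k, j * c / d) + Nfun c d k r)
      = ((Finset.range d).image (Nfun c d k)).image
        (fun x => (∑ j ∈ Finset.range k, j * c / d) + x) := by
    rw [Finset.image_image]
    simp only [Function.comp_def]
  rw [himg4, Finset.card_image_of_injective _ (add_right_injective _),
    claim2 c d k hd hgcd hkd hk1, Finset.card_range]
end

section
/- (Amiot, existence of type III maximally even sets) Let c > 12 be a composite positive integer (i.e., c is not prime). Then there exists an integer d with 0 < d < c such that, setting m = gcd(c,d), one has 1 < m < d and m ≠ c - d. (In the classification of maximally even sets, such a pair (c,d) yields a maximally even set of type III: neither generated with gcd 1, nor a regular division of ZMod c, nor the complement of one.) -/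
private lemma gcd_cases4 (g : ℕ) (h : g ∣ 4) : g = 1 ∨ g = 2 ∨ g = 4 := by
  have hle : g ≤ 4 := Nat.le_of_dvd (by norm_num) h
  interval_cases g <;> revert h <;> decide

private lemma gcd_cases8 (g : ℕ) (h : g ∣ 8) : g = 1 ∨ g = 2 ∨ g = 4 ∨ g = 8 := by
  have hle : g ≤ 8 := Nat.le_of_dvd (by norm_num) h
  interval_cases g <;> revert h <;> decide

/-- (Amiot) For every composite `c > 12` there is `d` with `0 < d < c` such that,
with `m = gcd(c,d)`, one has `1 < m < d` and `m ≠ c - d`: the pair `(c,d)` yields a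
maximally even set of type III. -/
theorem exists_type_III (c : ℕ) (hc : 12 < c) (hcomp : ¬ c.Prime) :
    ∃ d : ℕ, 0 < d ∧ d < c ∧ 1 < Nat.gcd c d ∧ Nat.gcd c d < d ∧
      Nat.gcd c d ≠ c - d := by
  rcases Nat.even_or_odd c with hev | hodd
  · -- c even
    obtain ⟨k, hk⟩ := hev
    rcases Nat.even_or_odd k with hkev | hkodd
    · -- 4 ∣ c
      obtain ⟨t, ht⟩ := hkev
      rcases Nat.even_or_odd t with htev | htodd
      · -- 8 ∣ c : take d = k - 2 where c = k + k
        obtain ⟨s, hs⟩ := htev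
        have hs2 : 2 ≤ s := by omega
        refine ⟨k - 2, by omega, by omega, ?_⟩
        have hg : Nat.gcd c (k - 2) = 2 := by
          have h1 : Nat.gcd c (k - 2) ∣ c := Nat.gcd_dvd_left _ _
          have h2 : Nat.gcd c (k - 2) ∣ (k - 2) := Nat.gcd_dvd_right _ _
          have h2' : Nat.gcd c (k - 2) ∣ 2 * (k - 2) := Dvd.dvd.mul_left h2 2
          have h4 : Nat.gcd c (k - 2) ∣ 4 := by
            have heq : c - 2 * (k - 2) = 4 := by omega
            have := Nat.dvd_sub h1 h2'
            rwa [heq] at this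
          have hd2 : 2 ∣ Nat.gcd c (k - 2) :=
            Nat.dvd_gcd ⟨k, by omega⟩ ⟨2 * s - 1, by omega⟩
          rcases gcd_cases4 _ h4 with h | h | h
          · omega
          · exact h
          · exfalso
            have : (4:ℕ) ∣ (k - 2) := h ▸ h2
            obtain ⟨u, hu⟩ := this
            omega
        rw [hg]; omega
      · -- c ≡ 4 mod 8 : take d = c - 8
        obtain ⟨s, hs⟩ := htodd
        have hs2 : 2 ≤ s := by omega
        refine ⟨c - 8, by omega, by omega, ?_⟩
        have hg : Nat.gcd c (c - 8) = 4 := by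
          have h1 : Nat.gcd c (c - 8) ∣ c := Nat.gcd_dvd_left _ _
          have h2 : Nat.gcd c (c - 8) ∣ (c - 8) := Nat.gcd_dvd_right _ _
          have h8 : Nat.gcd c (c - 8) ∣ 8 := by
            have heq : c - (c - 8) = 8 := by omega
            have := Nat.dvd_sub h1 h2
            rwa [heq] at this
          have hd4 : 4 ∣ Nat.gcd c (c - 8) :=
            Nat.dvd_gcd ⟨t, by omega⟩ ⟨t - 2, by omega⟩
          obtain ⟨u, hu⟩ := hd4
          rcases gcd_cases8 _ h8 with h | h | h | h
          · omega
          · omega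
          · exact h
          · exfalso
            have : (8:ℕ) ∣ c := h ▸ h1
            obtain ⟨v, hv⟩ := this
            omega
        rw [hg]; omega
    · -- c ≡ 2 mod 4 : take d = 4
      obtain ⟨t, ht⟩ := hkodd
      refine ⟨4, by omega, by omega, ?_⟩
      have hg : Nat.gcd c 4 = 2 := by
        have h1 : Nat.gcd c 4 ∣ c := Nat.gcd_dvd_left _ _
        have h2 : Nat.gcd c 4 ∣ 4 := Nat.gcd_dvd_right _ _
        have h3 : 2 ∣ Nat.gcd c 4 := Nat.dvd_gcd ⟨k, by omega⟩ ⟨2, rfl⟩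
        rcases gcd_cases4 _ h2 with h | h | h
        · omega
        · exact h
        · exfalso
          have : (4:ℕ) ∣ c := h ▸ h1
          obtain ⟨u, hu⟩ := this
          omega
      rw [hg]; omega
  · -- c odd : take d = c - 2p with p = minFac c
    obtain ⟨w, hw⟩ := hodd
    have hp : (c.minFac).Prime := Nat.minFac_prime (by omega)
    set p := c.minFac with hpdef
    have hpdvd : p ∣ c := Nat.minFac_dvd c
    obtain ⟨k, hk⟩ := hpdvd
    have hpk : p ≤ k := by
      have h := Nat.minFac_le_div (by omega : 0 < c) hcomp
      rw [← hpdef] at h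
      have hck : c / p = k := by
        rw [hk]; exact Nat.mul_div_cancel_left k hp.pos
      omega
    have hp2 : p ≠ 2 := by
      intro h
      rw [h] at hk; omega
    have hp3 : 3 ≤ p := by
      have := hp.two_le
      omega
    have hk5 : 5 ≤ k := by
      by_contra h
      push_neg at h
      -- k ≤ 4, k ≥ p ≥ 3
      interval_cases k
      · omega
      · exact hcomp (by rw [hk, mul_one]; exact hp)
      · omega
      · omega
      · omega
    have hpk' : c = p * k := hk
    have h3pc : 3 * p < c := by nlinarith
    refine ⟨c - 2 * p, by omega, by omega, ?_⟩
    have hg : Nat.gcd c (c - 2 * p) = p := by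
      have h1 : Nat.gcd c (c - 2 * p) ∣ c := Nat.gcd_dvd_left _ _
      have h2 : Nat.gcd c (c - 2 * p) ∣ (c - 2 * p) := Nat.gcd_dvd_right _ _
      have h2p : Nat.gcd c (c - 2 * p) ∣ p * 2 := by
        have heq : c - (c - 2 * p) = p * 2 := by omega
        have := Nat.dvd_sub h1 h2
        rwa [heq] at this
      have hgnot2 : ¬ (2 ∣ Nat.gcd c (c - 2 * p)) := by
        intro h2g
        obtain ⟨v, hv⟩ := h2g.trans h1
        omega
      have hcop : Nat.Coprime (Nat.gcd c (c - 2 * p)) 2 :=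
        ((Nat.Prime.coprime_iff_not_dvd Nat.prime_two).mpr hgnot2).symm
      have hdvdp : Nat.gcd c (c - 2 * p) ∣ p :=
        Nat.Coprime.dvd_of_dvd_mul_right hcop h2p
      have hpg : p ∣ Nat.gcd c (c - 2 * p) :=
        Nat.dvd_gcd ⟨k, hk⟩ (Nat.dvd_sub ⟨k, hk⟩ (Dvd.dvd.mul_left dvd_rfl 2))
      exact Nat.dvd_antisymm hdvdp hpg
    rw [hg]
    exact ⟨hp.one_lt, by omega, by omega⟩
end
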